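/- Let L > 0, M ≥ 0, and ε > 0. Let R, Q : ℝ → ℝ be differentiable at every point of [0, L] with Q'(s) ≥ 0 and (R'(s))² ≤ M · Q'(s) for all s ∈ [0, L]. Then for all a, b ∈ [0, L], (R(a) − R(b))² / ((Q(a) − Q(b))·(a − b) + ε) ≤ M. -/

import Mathlib

/-- Boundedness of the quotient in estimate (2.aux2) of the uniqueness proof:
if `Q' ≥ 0` and `(R')² ≤ M · Q'` on `[0, L]`, then for all `a, b ∈ [0, L]` and `ε > 0`,
`(R a − R b)² / ((Q a − Q b)·(a − b) + ε) ≤ M`. -/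
theorem stmt_1 (L M ε : ℝ) (hL : 0 < L) (hM : 0 ≤ M) (hε : 0 < ε) (R Q : ℝ → ℝ)
    (hR : ∀ s ∈ Set.Icc (0 : ℝ) L, DifferentiableAt ℝ R s)
    (hQ : ∀ s ∈ Set.Icc (0 : ℝ) L, DifferentiableAt ℝ Q s)
    (hQ' : ∀ s ∈ Set.Icc (0 : ℝ) L, 0 ≤ deriv Q s)
    (hRQ : ∀ s ∈ Set.Icc (0 : ℝ) L, (deriv R s) ^ 2 ≤ M * deriv Q s) :
    ∀ a ∈ Set.Icc (0 : ℝ) L, ∀ b ∈ Set.Icc (0 : ℝ) L,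
      (R a - R b) ^ 2 / ((Q a - Q b) * (a - b) + ε) ≤ M := by
  -- Q is monotone on [0, L]
  have hQmono : MonotoneOn Q (Set.Icc (0 : ℝ) L) := by
    apply monotoneOn_of_deriv_nonneg (convex_Icc 0 L)
      (fun s hs => (hQ s hs).continuousAt.continuousWithinAt)
      (fun s hs => (hQ s (interior_subset hs)).differentiableWithinAt)
      (fun s hs => hQ' s (interior_subset hs))
  -- for any f with (f')² ≤ M Q', and any t > 0, 2(f b - f a) ≤ t(b-a) + (M/t)(Q b - Q a)
  have step : ∀ f : ℝ → ℝ, (∀ s ∈ Set.Icc (0 : ℝ) L, DifferentiableAt ℝ f s) →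
      (∀ s ∈ Set.Icc (0 : ℝ) L, (deriv f s) ^ 2 ≤ M * deriv Q s) →
      ∀ a ∈ Set.Icc (0 : ℝ) L, ∀ b ∈ Set.Icc (0 : ℝ) L, a ≤ b → ∀ t : ℝ, 0 < t →
      2 * (f b - f a) ≤ t * (b - a) + (M / t) * (Q b - Q a) := by
    intro f hf hf' a ha b hb hab t ht
    set g : ℝ → ℝ := fun s => t * s + (M / t) * Q s - 2 * f s with hg
    have hgdiff : ∀ s ∈ Set.Icc (0 : ℝ) L, DifferentiableAt ℝ g s := fun s hs =>
      (((differentiableAt_id.const_mul t).add ((hQ s hs).const_mul _)).sub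
        ((hf s hs).const_mul _))
    have hmono : MonotoneOn g (Set.Icc (0 : ℝ) L) := by
      apply monotoneOn_of_deriv_nonneg (convex_Icc 0 L)
        (fun s hs => (hgdiff s hs).continuousAt.continuousWithinAt)
        (fun s hs => (hgdiff s (interior_subset hs)).differentiableWithinAt)
      intro s hs
      have hs' : s ∈ Set.Icc (0 : ℝ) L := interior_subset hs
      have hd : HasDerivAt g (t * 1 + (M / t) * deriv Q s - 2 * deriv f s) s := by
        exact (((hasDerivAt_id s).const_mul t).add
          ((hQ s hs').hasDerivAt.const_mul (M / t))).sub
          ((hf s hs').hasDerivAt.const_mul 2)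
      rw [hd.deriv]
      have h1 := hf' s hs'
      have h2 := hQ' s hs'
      have key : 0 ≤ t * (t * 1 + M / t * deriv Q s - 2 * deriv f s) := by
        have : t * (M / t) = M := by field_simp
        nlinarith [sq_nonneg (t - deriv f s)]
      nlinarith
    have := hmono ha hb hab
    simp only [hg] at this
    linarith
  -- key quadratic estimate
  have key : ∀ a ∈ Set.Icc (0 : ℝ) L, ∀ b ∈ Set.Icc (0 : ℝ) L, a ≤ b →
      (R b - R a) ^ 2 ≤ M * ((Q b - Q a) * (b - a)) := by
    intro a ha b hb hab
    set X := |R b - R a| with hX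
    set A := b - a with hA
    set B := M * (Q b - Q a) with hB
    have hA0 : 0 ≤ A := by simp [hA]; linarith
    have hB0 : 0 ≤ B := mul_nonneg hM (by linarith [hQmono ha hb hab])
    have hX0 : 0 ≤ X := abs_nonneg _
    have hquad : ∀ t : ℝ, 0 ≤ A * (t * t) + (-(2 * X)) * t + B := by
      intro t
      rcases lt_trichotomy t 0 with h | h | h
      · nlinarith
      · simp [h]; linarith
      · have h1 := step R hR hRQ a ha b hb hab t h
        have h2 := step (fun s => -R s) (fun s hs => (hR s hs).neg)
          (fun s hs => by
            have : deriv (fun s => -R s) s = -deriv R s := deriv.neg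
            rw [this]; simpa using hRQ s hs) a ha b hb hab t h
        have hXle : 2 * X ≤ t * A + B / t := by
          have heq : (M / t) * (Q b - Q a) = B / t := by rw [hB]; ring
          rw [heq] at h1 h2
          rcases abs_cases (R b - R a) with ⟨he, _⟩ | ⟨he, _⟩ <;>
            rw [hX, he] <;> linarith
        have := mul_le_mul_of_nonneg_left hXle (le_of_lt h)
        have hBt : t * (B / t) = B := by field_simp
        nlinarith
    have hdisc := discrim_le_zero hquad
    rw [discrim] at hdisc
    have : X ^ 2 ≤ A * B := by nlinarith
    calc (R b - R a) ^ 2 = X ^ 2 := (sq_abs _).symm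
      _ ≤ A * B := this
      _ = M * ((Q b - Q a) * (b - a)) := by rw [hA, hB]; ring
  intro a ha b hb
  have main : (R a - R b) ^ 2 ≤ M * ((Q a - Q b) * (a - b)) := by
    rcases le_total a b with h | h
    · have := key a ha b hb h
      nlinarith [this]
    · have := key b hb a ha h
      nlinarith [this]
  have hprod : 0 ≤ (Q a - Q b) * (a - b) := by
    rcases le_total a b with h | h
    · have := hQmono ha hb h; nlinarith
    · have := hQmono hb ha h; nlinarith
  rw [div_le_iff₀ (by linarith)]
  nlinarith
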